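/- Let n, r ∈ ℕ, let P be a real symmetric positive semidefinite n×n matrix, let L be a real r×n matrix, and let R be a real symmetric positive definite r×r matrix. Then the updated covariance P⁺ = P − P·Lᵀ·(L·P·Lᵀ + R)^{-1}·L·P (i.e., (I − K·L)·P with Kalman gain K = P·Lᵀ·(L·P·Lᵀ + R)^{-1}) is symmetric positive semidefinite. -/

import Mathlib

open Matrix

/-- Let P be a real symmetric positive semidefinite n×n matrix,
L a real r×n matrix, and R a real symmetric positive definite r×r matrix.
Then the updated covariance P⁺ = P − P·Lᵀ·(L·P·Lᵀ + R)⁻¹·L·P (i.e. (I − K·L)·P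
with Kalman gain K = P·Lᵀ·(L·P·Lᵀ + R)⁻¹) is symmetric positive semidefinite. -/
theorem updated_covariance_posSemidef (n r : ℕ)
    (P : Matrix (Fin n) (Fin n) ℝ) (hP : P.PosSemidef)
    (L : Matrix (Fin r) (Fin n) ℝ)
    (R : Matrix (Fin r) (Fin r) ℝ) (hR : R.PosDef) :
    (P - P * Lᵀ * (L * P * Lᵀ + R)⁻¹ * L * P).PosSemidef := by
  have hPT : Pᵀ = P := by
    rw [← conjTranspose_eq_transpose_of_trivial, hP.isHermitian.eq]
  have hRT : Rᵀ = R := by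
    rw [← conjTranspose_eq_transpose_of_trivial, hR.isHermitian.eq]
  have hLPL : (L * P * Lᵀ).PosSemidef := by
    have := hP.mul_mul_conjTranspose_same L
    simpa using this
  have hS : (L * P * Lᵀ + R).PosDef := Matrix.PosDef.posSemidef_add hLPL hR
  have : Invertible (L * P * Lᵀ + R) := hS.isUnit.invertible
  have hblock : (fromBlocks (L * P * Lᵀ + R) (L * P) (L * P)ᴴ P).PosSemidef := by
    have h1 : (fromBlocks (L * P * Lᵀ) (L * P) (L * P)ᴴ P).PosSemidef := by
      have := (hP.mul_mul_conjTranspose_same (fromRows L (1 : Matrix (Fin n) (Fin n) ℝ)))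
      rw [conjTranspose_fromRows_eq_fromCols_conjTranspose, fromRows_mul,
        fromRows_mul_fromCols] at this
      simpa [conjTranspose_mul, hP.isHermitian.eq, conjTranspose_eq_transpose_of_trivial, hPT,
        Matrix.mul_assoc] using this
    have h2 : (fromBlocks R (0 : Matrix (Fin r) (Fin n) ℝ)
        (0 : Matrix (Fin n) (Fin r) ℝ) (0 : Matrix (Fin n) (Fin n) ℝ)).PosSemidef := by
      rw [posSemidef_iff_dotProduct_mulVec]
      constructor
      · rw [IsHermitian, fromBlocks_conjTranspose]
        simp [conjTranspose_eq_transpose_of_trivial, hRT]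
      · intro x
        have := hR.posSemidef.dotProduct_mulVec_nonneg (x ∘ Sum.inl)
        simpa [mulVec, dotProduct, Fintype.sum_sum_type, fromBlocks] using this
    have := h1.add h2
    simpa [fromBlocks_add] using this
  have key := (Matrix.PosDef.fromBlocks₁₁ (L * P) P hS).mp hblock
  have hconj : (L * P)ᴴ = P * Lᵀ := by
    rw [conjTranspose_mul, hP.isHermitian.eq, conjTranspose_eq_transpose_of_trivial]
  rw [hconj] at key
  simpa [Matrix.mul_assoc] using key
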